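/- For t ∈ ℝ let x₁(u,v,t) = (u + v − 2uv + 4 t u v (1−u)(1−v)(1−2u)(1−2v), v, u), and let H₁(u,v,t) = e₁G₁ − 2F₁f₁ + g₁E₁ be the mean-curvature numerator of the surface (u,v) ↦ x₁(u,v,t). Then: (i) for every fixed (u,v), t ↦ H₁(u,v,t) is a polynomial of degree at most 3, with H₁(u,v,0) = −4(1−2u)(1−2v); and (ii) the function μ₁²(t) = ∫₀¹ ∫₀¹ H₁(u,v,t)² du dv has strictly negative derivative at t = 0, so the curvature ansatz decreases the mean-square curvature to first order. -/

import Mathlib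

/- Differential-geometric framework: partial derivatives, fundamental magnitudes,
   cross product and mean-curvature numerator for parametrized surfaces x : ℝ² → ℝ³. -/

noncomputable section
open Real MeasureTheory intervalIntegral
open scoped RealInnerProductSpace

abbrev E3 : Type := EuclideanSpace ℝ (Fin 3)

/-- The vector (a, b, c) ∈ ℝ³. -/
def vec3 (a b c : ℝ) : E3 := WithLp.toLp 2 ![a, b, c]

/-- Cross product on ℝ³. -/
def cross (a b : E3) : E3 :=
  vec3 (a 1 * b 2 - a 2 * b 1) (a 2 * b 0 - a 0 * b 2) (a 0 * b 1 - a 1 * b 0)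

/-- Partial derivative with respect to the first parameter. -/
def pu (x : ℝ → ℝ → E3) (u v : ℝ) : E3 := deriv (fun s => x s v) u

/-- Partial derivative with respect to the second parameter. -/
def pv (x : ℝ → ℝ → E3) (u v : ℝ) : E3 := deriv (fun s => x u s) v

/-- First fundamental magnitude E = ⟨x_u, x_u⟩. -/
def Emag (x : ℝ → ℝ → E3) (u v : ℝ) : ℝ := ⟪pu x u v, pu x u v⟫

/-- First fundamental magnitude F = ⟨x_u, x_v⟩. -/
def Fmag (x : ℝ → ℝ → E3) (u v : ℝ) : ℝ := ⟪pu x u v, pv x u v⟫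

/-- First fundamental magnitude G = ⟨x_v, x_v⟩. -/
def Gmag (x : ℝ → ℝ → E3) (u v : ℝ) : ℝ := ⟪pv x u v, pv x u v⟫

/-- Cross-product second fundamental magnitude e = ⟨x_uu, x_u × x_v⟩. -/
def emag (x : ℝ → ℝ → E3) (u v : ℝ) : ℝ := ⟪pu (pu x) u v, cross (pu x u v) (pv x u v)⟫

/-- Cross-product second fundamental magnitude f = ⟨x_uv, x_u × x_v⟩. -/
def fmag (x : ℝ → ℝ → E3) (u v : ℝ) : ℝ := ⟪pv (pu x) u v, cross (pu x u v) (pv x u v)⟫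

/-- Cross-product second fundamental magnitude g = ⟨x_vv, x_u × x_v⟩. -/
def gmag (x : ℝ → ℝ → E3) (u v : ℝ) : ℝ := ⟪pv (pv x) u v, cross (pu x u v) (pv x u v)⟫

/-- Mean-curvature numerator H = eG − 2Ff + gE. -/
def Hnum (x : ℝ → ℝ → E3) (u v : ℝ) : ℝ :=
  emag x u v * Gmag x u v - 2 * Fmag x u v * fmag x u v + gmag x u v * Emag x u v

/-- The curvature-ansatz family for the bilinear interpolant:
x₁(u,v,t) = (u + v − 2uv + 4 t u v (1−u)(1−v)(1−2u)(1−2v), v, u). -/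
def bilinVar (t : ℝ) : ℝ → ℝ → E3 :=
  fun u v => vec3
    (u + v - 2 * u * v
      + 4 * t * u * v * (1 - u) * (1 - v) * (1 - 2 * u) * (1 - 2 * v)) v u


set_option maxRecDepth 100000

@[simp] lemma vec3_zero (a b c : ℝ) : vec3 a b c 0 = a := rfl
@[simp] lemma vec3_one (a b c : ℝ) : vec3 a b c 1 = b := rfl
@[simp] lemma vec3_two (a b c : ℝ) : vec3 a b c 2 = c := rfl

lemma inner_vec3 (a b c d e f : ℝ) : ⟪vec3 a b c, vec3 d e f⟫ = a*d + b*e + c*f := by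
  simp [vec3, PiLp.inner_apply, Fin.sum_univ_three]
  ring

lemma cross_vec3 (a b c d e f : ℝ) :
    cross (vec3 a b c) (vec3 d e f) = vec3 (b*f - c*e) (c*d - a*f) (a*e - b*d) := rfl

lemma hasDerivAt_cubic (a b c d x : ℝ) :
    HasDerivAt (fun s : ℝ => a + b*s + c*s^2 + d*s^3) (b + 2*c*x + 3*d*x^2) x := by
  have h := (((hasDerivAt_const x a).add ((hasDerivAt_id x).const_mul b)).add
      ((hasDerivAt_pow 2 x).const_mul c)).add ((hasDerivAt_pow 3 x).const_mul d)
  refine h.congr_deriv ?_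
  push_cast; ring

lemma hasDerivAt_vec3 {a b c : ℝ → ℝ} {a' b' c' : ℝ} {x : ℝ}
    (ha : HasDerivAt a a' x) (hb : HasDerivAt b b' x) (hc : HasDerivAt c c' x) :
    HasDerivAt (fun s => vec3 (a s) (b s) (c s)) (vec3 a' b' c') x := by
  have hp : HasDerivAt (fun s => (![a s, b s, c s] : Fin 3 → ℝ)) ![a', b', c'] x := by
    refine hasDerivAt_pi.mpr fun i => ?_
    fin_cases i <;> simpa
  have h3 := ((EuclideanSpace.equiv (Fin 3) ℝ).symm.comp_hasFDerivAt_iff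
    (f := fun s => (![a s, b s, c s] : Fin 3 → ℝ))).mpr hp.hasFDerivAt
  simpa [vec3, Function.comp_def] using h3.hasDerivAt

def phiU (t u v : ℝ) : ℝ := 1 - 2*v + 4*t*(v - 3*v^2 + 2*v^3)*(1 - 6*u + 6*u^2)
def phiV (t u v : ℝ) : ℝ := 1 - 2*u + 4*t*(u - 3*u^2 + 2*u^3)*(1 - 6*v + 6*v^2)
def phiUU (t u v : ℝ) : ℝ := 4*t*(v - 3*v^2 + 2*v^3)*(12*u - 6)
def phiVV (t u v : ℝ) : ℝ := 4*t*(u - 3*u^2 + 2*u^3)*(12*v - 6)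
def phiUV (t u v : ℝ) : ℝ := -2 + 4*t*(1 - 6*u + 6*u^2)*(1 - 6*v + 6*v^2)

lemma hasDerivAt_bv_u (t u v : ℝ) :
    HasDerivAt (fun s => bilinVar t s v) (vec3 (phiU t u v) 0 1) u := by
  refine hasDerivAt_vec3 ?_ (hasDerivAt_const u v) (hasDerivAt_id u)
  have h := hasDerivAt_cubic v (1 - 2*v + 4*t*(v - 3*v^2 + 2*v^3))
    (-12*t*(v - 3*v^2 + 2*v^3)) (8*t*(v - 3*v^2 + 2*v^3)) u
  convert h using 1
  · funext s; ring
  · simp only [phiU]; ring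

lemma pu_bv (t u v : ℝ) : pu (bilinVar t) u v = vec3 (phiU t u v) 0 1 :=
  (hasDerivAt_bv_u t u v).deriv

lemma hasDerivAt_bv_v (t u v : ℝ) :
    HasDerivAt (fun s => bilinVar t u s) (vec3 (phiV t u v) 1 0) v := by
  refine hasDerivAt_vec3 ?_ (hasDerivAt_id v) (hasDerivAt_const v u)
  have h := hasDerivAt_cubic u (1 - 2*u + 4*t*(u - 3*u^2 + 2*u^3))
    (-12*t*(u - 3*u^2 + 2*u^3)) (8*t*(u - 3*u^2 + 2*u^3)) v
  convert h using 1
  · funext s; ring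
  · simp only [phiV]; ring

lemma pv_bv (t u v : ℝ) : pv (bilinVar t) u v = vec3 (phiV t u v) 1 0 :=
  (hasDerivAt_bv_v t u v).deriv

lemma puu_bv (t u v : ℝ) : pu (pu (bilinVar t)) u v = vec3 (phiUU t u v) 0 0 := by
  have hf : (fun s => pu (bilinVar t) s v) = (fun s => vec3 (phiU t s v) 0 1) := by
    funext s; exact pu_bv t s v
  have h1 : HasDerivAt (fun s => phiU t s v) (phiUU t u v) u := by
    have h := hasDerivAt_cubic (1 - 2*v + 4*t*(v - 3*v^2 + 2*v^3))
      (-24*t*(v - 3*v^2 + 2*v^3)) (24*t*(v - 3*v^2 + 2*v^3)) 0 u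
    convert h using 1
    · funext s; simp only [phiU]; ring
    · simp only [phiUU]; ring
  show deriv (fun s => pu (bilinVar t) s v) u = _
  rw [hf]
  exact (hasDerivAt_vec3 h1 (hasDerivAt_const u 0) (hasDerivAt_const u 1)).deriv

lemma puv_bv (t u v : ℝ) : pv (pu (bilinVar t)) u v = vec3 (phiUV t u v) 0 0 := by
  have hf : (fun s => pu (bilinVar t) u s) = (fun s => vec3 (phiU t u s) 0 1) := by
    funext s; exact pu_bv t u s
  have h1 : HasDerivAt (fun s => phiU t u s) (phiUV t u v) v := by
    have h := hasDerivAt_cubic 1 (-2 + 4*t*(1 - 6*u + 6*u^2))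
      (-12*t*(1 - 6*u + 6*u^2)) (8*t*(1 - 6*u + 6*u^2)) v
    convert h using 1
    · funext s; simp only [phiU]; ring
    · simp only [phiUV]; ring
  show deriv (fun s => pu (bilinVar t) u s) v = _
  rw [hf]
  exact (hasDerivAt_vec3 h1 (hasDerivAt_const v 0) (hasDerivAt_const v 1)).deriv

lemma pvv_bv (t u v : ℝ) : pv (pv (bilinVar t)) u v = vec3 (phiVV t u v) 0 0 := by
  have hf : (fun s => pv (bilinVar t) u s) = (fun s => vec3 (phiV t u s) 1 0) := by
    funext s; exact pv_bv t u s
  have h1 : HasDerivAt (fun s => phiV t u s) (phiVV t u v) v := by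
    have h := hasDerivAt_cubic (1 - 2*u + 4*t*(u - 3*u^2 + 2*u^3))
      (-24*t*(u - 3*u^2 + 2*u^3)) (24*t*(u - 3*u^2 + 2*u^3)) 0 v
    convert h using 1
    · funext s; simp only [phiV]; ring
    · simp only [phiVV]; ring
  show deriv (fun s => pv (bilinVar t) u s) v = _
  rw [hf]
  exact (hasDerivAt_vec3 h1 (hasDerivAt_const v 1) (hasDerivAt_const v 0)).deriv

lemma Hnum_eq (t u v : ℝ) : Hnum (bilinVar t) u v =
    -(phiUU t u v)*((phiV t u v)^2+1) + 2*(phiU t u v)*(phiV t u v)*(phiUV t u v)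
      - (phiVV t u v)*((phiU t u v)^2+1) := by
  simp only [Hnum, Emag, Fmag, Gmag, emag, fmag, gmag, pu_bv, pv_bv, puu_bv, puv_bv, pvv_bv,
    cross_vec3, inner_vec3]
  ring


lemma integral01_dsum {n m : ℕ} (F : Fin n → Fin m → ℝ) (e : Fin n → Fin m → ℕ) :
    (∫ x in (0:ℝ)..1, ∑ k : Fin n, ∑ l : Fin m, F k l * x ^ (e k l)) =
      ∑ k : Fin n, ∑ l : Fin m, F k l / (e k l + 1) := by
  rw [intervalIntegral.integral_finset_sum (fun k _ => ?_)]
  · refine Finset.sum_congr rfl fun k _ => ?_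
    rw [intervalIntegral.integral_finset_sum (fun l _ => by
      exact ((continuous_const.mul (continuous_pow _)).intervalIntegrable 0 1))]
    refine Finset.sum_congr rfl fun l _ => ?_
    rw [intervalIntegral.integral_const_mul, integral_pow]
    norm_num [div_eq_mul_inv]
  · exact (Continuous.intervalIntegrable (by continuity) 0 1)

lemma integral01_sum {n : ℕ} (c : Fin n → ℝ) :
    (∫ x in (0:ℝ)..1, ∑ k : Fin n, c k * x ^ (k : ℕ)) = ∑ k : Fin n, c k / ((k : ℕ) + 1) := by
  rw [intervalIntegral.integral_finset_sum (fun k _ => by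
    exact ((continuous_const.mul (continuous_pow _)).intervalIntegrable 0 1))]
  refine Finset.sum_congr rfl fun k _ => ?_
  rw [intervalIntegral.integral_const_mul, integral_pow]
  norm_num [div_eq_mul_inv]

lemma sq_sum_poly {n : ℕ} (c : Fin n → ℝ) (x : ℝ) :
    (∑ k : Fin n, c k * x ^ (k : ℕ))^2 =
      ∑ k : Fin n, ∑ l : Fin n, (c k * c l) * x ^ ((k : ℕ) + (l : ℕ)) := by
  rw [sq, Finset.sum_mul_sum]
  refine Finset.sum_congr rfl fun k _ => Finset.sum_congr rfl fun l _ => ?_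
  rw [pow_add]; ring

set_option maxHeartbeats 2000000 in
def hk (u t : ℝ) : Fin 8 → ℝ := ![
(-4 : ℝ) + (8 : ℝ)*t + (8 : ℝ)*u + (-32 : ℝ)*u*t + (32 : ℝ)*u*t^2 + (48 : ℝ)*u^2*t + (-288 : ℝ)*u^2*t^2 + (-32 : ℝ)*u^3*t + (832 : ℝ)*u^3*t^2 + (-960 : ℝ)*u^4*t^2 + (384 : ℝ)*u^5*t^2,
(8 : ℝ) + (-32 : ℝ)*t + (32 : ℝ)*t^2 + (-16 : ℝ)*u + (384 : ℝ)*u*t + (-576 : ℝ)*u*t^2 + (128 : ℝ)*u*t^3 + (-960 : ℝ)*u^2*t + (3840 : ℝ)*u^2*t^2 + (-1536 : ℝ)*u^2*t^3 + (640 : ℝ)*u^3*t + (-10240 : ℝ)*u^3*t^2 + (7936 : ℝ)*u^3*t^3 + (11520 : ℝ)*u^4*t^2 + (-21120 : ℝ)*u^4*t^3 + (-4608 : ℝ)*u^5*t^2 + (29952 : ℝ)*u^5*t^3 + (-21504 : ℝ)*u^6*t^3 + (6144 : ℝ)*u^7*t^3,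
(48 : ℝ)*t + (-288 : ℝ)*t^2 + (-960 : ℝ)*u*t + (3840 : ℝ)*u*t^2 + (-1536 : ℝ)*u*t^3 + (2592 : ℝ)*u^2*t + (-22464 : ℝ)*u^2*t^2 + (17280 : ℝ)*u^2*t^3 + (-1728 : ℝ)*u^3*t + (57216 : ℝ)*u^3*t^2 + (-86016 : ℝ)*u^3*t^3 + (-63360 : ℝ)*u^4*t^2 + (224640 : ℝ)*u^4*t^3 + (25344 : ℝ)*u^5*t^2 + (-315648 : ℝ)*u^5*t^3 + (225792 : ℝ)*u^6*t^3 + (-64512 : ℝ)*u^7*t^3,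
(-32 : ℝ)*t + (832 : ℝ)*t^2 + (640 : ℝ)*u*t + (-10240 : ℝ)*u*t^2 + (7936 : ℝ)*u*t^3 + (-1728 : ℝ)*u^2*t + (57216 : ℝ)*u^2*t^2 + (-86016 : ℝ)*u^2*t^3 + (1152 : ℝ)*u^3*t + (-143104 : ℝ)*u^3*t^2 + (418304 : ℝ)*u^3*t^3 + (157440 : ℝ)*u^4*t^2 + (-1079040 : ℝ)*u^4*t^3 + (-62976 : ℝ)*u^5*t^2 + (1506816 : ℝ)*u^5*t^3 + (-1075200 : ℝ)*u^6*t^3 + (307200 : ℝ)*u^7*t^3,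
(-960 : ℝ)*t^2 + (11520 : ℝ)*u*t^2 + (-21120 : ℝ)*u*t^3 + (-63360 : ℝ)*u^2*t^2 + (224640 : ℝ)*u^2*t^3 + (157440 : ℝ)*u^3*t^2 + (-1079040 : ℝ)*u^3*t^3 + (-172800 : ℝ)*u^4*t^2 + (2764800 : ℝ)*u^4*t^3 + (69120 : ℝ)*u^5*t^2 + (-3847680 : ℝ)*u^5*t^3 + (2741760 : ℝ)*u^6*t^3 + (-783360 : ℝ)*u^7*t^3,
(384 : ℝ)*t^2 + (-4608 : ℝ)*u*t^2 + (29952 : ℝ)*u*t^3 + (25344 : ℝ)*u^2*t^2 + (-315648 : ℝ)*u^2*t^3 + (-62976 : ℝ)*u^3*t^2 + (1506816 : ℝ)*u^3*t^3 + (69120 : ℝ)*u^4*t^2 + (-3847680 : ℝ)*u^4*t^3 + (-27648 : ℝ)*u^5*t^2 + (5345280 : ℝ)*u^5*t^3 + (-3806208 : ℝ)*u^6*t^3 + (1087488 : ℝ)*u^7*t^3,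
(-21504 : ℝ)*u*t^3 + (225792 : ℝ)*u^2*t^3 + (-1075200 : ℝ)*u^3*t^3 + (2741760 : ℝ)*u^4*t^3 + (-3806208 : ℝ)*u^5*t^3 + (2709504 : ℝ)*u^6*t^3 + (-774144 : ℝ)*u^7*t^3,
(6144 : ℝ)*u*t^3 + (-64512 : ℝ)*u^2*t^3 + (307200 : ℝ)*u^3*t^3 + (-783360 : ℝ)*u^4*t^3 + (1087488 : ℝ)*u^5*t^3 + (-774144 : ℝ)*u^6*t^3 + (221184 : ℝ)*u^7*t^3]

set_option maxHeartbeats 2000000 in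
def Dv (t : ℝ) : Fin 15 → ℝ := ![
((16 : ℝ)/3) + ((-256 : ℝ)/15)*t + ((64 : ℝ)/5)*t^2 + ((256 : ℝ)/105)*t^3 + ((512 : ℝ)/1155)*t^4,
((-64 : ℝ)/3) + ((512 : ℝ)/15)*t + ((-1024 : ℝ)/21)*t^2 + ((4096 : ℝ)/105)*t^3 + ((16384 : ℝ)/1155)*t^4 + ((2048 : ℝ)/2145)*t^5,
((64 : ℝ)/3) + ((512 : ℝ)/5)*t + ((3328 : ℝ)/7)*t^2 + ((-9728 : ℝ)/21)*t^3 + ((-49152 : ℝ)/385)*t^4 + ((18432 : ℝ)/1001)*t^5 + ((24576 : ℝ)/5005)*t^6,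
((-4096 : ℝ)/15)*t + ((-272896 : ℝ)/105)*t^2 + ((99328 : ℝ)/105)*t^3 + ((-55296 : ℝ)/77)*t^4 + ((-1421312 : ℝ)/2145)*t^5 + ((-663552 : ℝ)/5005)*t^6,
((2048 : ℝ)/15)*t + ((594688 : ℝ)/105)*t^2 + (2560 : ℝ)*t^3 + ((407552 : ℝ)/33)*t^4 + ((108634112 : ℝ)/15015)*t^5 + ((8134656 : ℝ)/5005)*t^6,
((-183296 : ℝ)/35)*t^2 + ((-448512 : ℝ)/35)*t^3 + ((-23701504 : ℝ)/385)*t^4 + ((-212856832 : ℝ)/5005)*t^5 + ((-1695744 : ℝ)/143)*t^6,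
((183296 : ℝ)/105)*t^2 + ((2054144 : ℝ)/105)*t^3 + ((184551424 : ℝ)/1155)*t^4 + ((464580608 : ℝ)/3003)*t^5 + ((285351936 : ℝ)/5005)*t^6,
((-65536 : ℝ)/5)*t^3 + ((-18530304 : ℝ)/77)*t^4 + ((-1841135616 : ℝ)/5005)*t^5 + ((-948731904 : ℝ)/5005)*t^6,
((16384 : ℝ)/5)*t^3 + ((16306176 : ℝ)/77)*t^4 + ((582918144 : ℝ)/1001)*t^5 + ((171712512 : ℝ)/385)*t^6,
((-7782400 : ℝ)/77)*t^4 + ((-609255424 : ℝ)/1001)*t^5 + ((-340328448 : ℝ)/455)*t^6,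
((1556480 : ℝ)/77)*t^4 + ((403865600 : ℝ)/1001)*t^5 + ((80805888 : ℝ)/91)*t^6,
((-769130496 : ℝ)/5005)*t^5 + ((-3647471616 : ℝ)/5005)*t^6,
((128188416 : ℝ)/5005)*t^5 + ((1967652864 : ℝ)/5005)*t^6,
((-89653248 : ℝ)/715)*t^6,
((89653248 : ℝ)/5005)*t^6]

set_option maxHeartbeats 2000000 in
def qpoly (t : ℝ) : ℝ := ((16 : ℝ)/9) + ((-512 : ℝ)/75)*t + ((7872 : ℝ)/1225)*t^2 + ((512 : ℝ)/735)*t^3 + ((23552 : ℝ)/88935)*t^4 + ((190464 : ℝ)/25050025)*t^5 + ((2048 : ℝ)/2277275)*t^6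


set_option maxHeartbeats 4000000 in
lemma hk_rep (t u v : ℝ) :
    Hnum (bilinVar t) u v = ∑ k : Fin 8, hk u t k * v ^ (k : ℕ) := by
  rw [Hnum_eq]
  simp only [hk, phiU, phiV, phiUU, phiVV, phiUV, Fin.sum_univ_succ, Fin.sum_univ_zero,
    Matrix.cons_val_zero, Matrix.cons_val_succ, Fin.val_zero, Fin.val_succ]
  push_cast
  ring

lemma inner_int (t u : ℝ) :
    (∫ v in (0:ℝ)..1, (Hnum (bilinVar t) u v) ^ 2) =
      ∑ k : Fin 8, ∑ l : Fin 8, (hk u t k * hk u t l) / (((k : ℕ) + (l : ℕ)) + 1) := by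
  have h : ∀ v : ℝ, (Hnum (bilinVar t) u v) ^ 2 =
      ∑ k : Fin 8, ∑ l : Fin 8, (hk u t k * hk u t l) * v ^ ((k : ℕ) + (l : ℕ)) := by
    intro v; rw [hk_rep, sq_sum_poly]
  simp only [h]
  have := integral01_dsum (fun k l => hk u t k * hk u t l)
    (fun k l : Fin 8 => (k : ℕ) + (l : ℕ))
  simpa using this

set_option maxHeartbeats 8000000 in
lemma outer_rep (t u : ℝ) :
    (∑ k : Fin 8, ∑ l : Fin 8, (hk u t k * hk u t l) / (((k : ℕ) + (l : ℕ)) + 1)) =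
      ∑ j : Fin 15, Dv t j * u ^ (j : ℕ) := by
  simp only [hk, Dv, Fin.sum_univ_succ, Fin.sum_univ_zero,
    Matrix.cons_val_zero, Matrix.cons_val_succ, Fin.val_zero, Fin.val_succ]
  push_cast
  ring

lemma final_sum (t : ℝ) :
    (∑ j : Fin 15, Dv t j / ((j : ℕ) + 1)) = qpoly t := by
  simp only [Dv, qpoly, Fin.sum_univ_succ, Fin.sum_univ_zero,
    Matrix.cons_val_zero, Matrix.cons_val_succ, Fin.val_zero, Fin.val_succ]
  push_cast
  ring

lemma mu_eq (t : ℝ) :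
    (∫ u in (0:ℝ)..1, ∫ v in (0:ℝ)..1, (Hnum (bilinVar t) u v) ^ 2) = qpoly t := by
  have h : ∀ u : ℝ, (∫ v in (0:ℝ)..1, (Hnum (bilinVar t) u v) ^ 2) =
      ∑ j : Fin 15, Dv t j * u ^ (j : ℕ) := fun u => (inner_int t u).trans (outer_rep t u)
  simp only [h]
  rw [integral01_sum]
  exact final_sum t

set_option maxHeartbeats 4000000 in
lemma part_i (u v t : ℝ) :
    Hnum (bilinVar t) u v = ((-4 : ℝ) + (8 : ℝ)*v + (8 : ℝ)*u + (-16 : ℝ)*u*v) + ((8 : ℝ) + (-32 : ℝ)*v + (48 : ℝ)*v^2 + (-32 : ℝ)*v^3 + (-32 : ℝ)*u + (384 : ℝ)*u*v + (-960 : ℝ)*u*v^2 + (640 : ℝ)*u*v^3 + (48 : ℝ)*u^2 + (-960 : ℝ)*u^2*v + (2592 : ℝ)*u^2*v^2 + (-1728 : ℝ)*u^2*v^3 + (-32 : ℝ)*u^3 + (640 : ℝ)*u^3*v + (-1728 : ℝ)*u^3*v^2 + (1152 : ℝ)*u^3*v^3) * t + ((32 : ℝ)*v + (-288 : ℝ)*v^2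 + (832 : ℝ)*v^3 + (-960 : ℝ)*v^4 + (384 : ℝ)*v^5 + (32 : ℝ)*u + (-576 : ℝ)*u*v + (3840 : ℝ)*u*v^2 + (-10240 : ℝ)*u*v^3 + (11520 : ℝ)*u*v^4 + (-4608 : ℝ)*u*v^5 + (-288 : ℝ)*u^2 + (3840 : ℝ)*u^2*v + (-22464 : ℝ)*u^2*v^2 + (57216 : ℝ)*u^2*v^3 + (-63360 : ℝ)*u^2*v^4 + (25344 : ℝ)*u^2*v^5 + (832 : ℝ)*u^3 + (-10240 : ℝ)*u^3*v + (57216 : ℝ)*u^3*v^2 + (-143104 : ℝ)*u^3*v^3 + (157440 : ℝ)*u^3*v^4 + (-62976 : ℝ)*u^3*v^5 + (-960 : ℝ)*u^4 + (11520 : ℝ)*u^4*v + (-63360 : ℝ)*u^4*v^2 + (157440 : ℝ)*u^4*v^3 + (-172800 : ℝ)*u^4*v^4 + (69120 : ℝ)*u^4*v^5 + (384 : ℝ)*u^5 + (-4608 : ℝ)*u^5*v + (25344 : ℝ)*u^5*v^2 + (-62976 : ℝ)*u^5*v^3 + (69120 : ℝ)*u^5*v^4 + (-27648 : ℝ)*u^5*v^5)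 * t ^ 2 + ((128 : ℝ)*u*v + (-1536 : ℝ)*u*v^2 + (7936 : ℝ)*u*v^3 + (-21120 : ℝ)*u*v^4 + (29952 : ℝ)*u*v^5 + (-21504 : ℝ)*u*v^6 + (6144 : ℝ)*u*v^7 + (-1536 : ℝ)*u^2*v + (17280 : ℝ)*u^2*v^2 + (-86016 : ℝ)*u^2*v^3 + (224640 : ℝ)*u^2*v^4 + (-315648 : ℝ)*u^2*v^5 + (225792 : ℝ)*u^2*v^6 + (-64512 : ℝ)*u^2*v^7 + (7936 : ℝ)*u^3*v + (-86016 : ℝ)*u^3*v^2 + (418304 : ℝ)*u^3*v^3 + (-1079040 : ℝ)*u^3*v^4 + (1506816 : ℝ)*u^3*v^5 + (-1075200 : ℝ)*u^3*v^6 + (307200 : ℝ)*u^3*v^7 + (-21120 : ℝ)*u^4*v + (224640 : ℝ)*u^4*v^2 + (-1079040 : ℝ)*u^4*v^3 + (2764800 : ℝ)*u^4*v^4 + (-3847680 : ℝ)*u^4*v^5 + (2741760 : ℝ)*u^4*v^6 + (-783360 : ℝ)*u^4*v^7 + (29952 : ℝ)*u^5*v + (-315648 : ℝ)*u^5*v^2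 + (1506816 : ℝ)*u^5*v^3 + (-3847680 : ℝ)*u^5*v^4 + (5345280 : ℝ)*u^5*v^5 + (-3806208 : ℝ)*u^5*v^6 + (1087488 : ℝ)*u^5*v^7 + (-21504 : ℝ)*u^6*v + (225792 : ℝ)*u^6*v^2 + (-1075200 : ℝ)*u^6*v^3 + (2741760 : ℝ)*u^6*v^4 + (-3806208 : ℝ)*u^6*v^5 + (2709504 : ℝ)*u^6*v^6 + (-774144 : ℝ)*u^6*v^7 + (6144 : ℝ)*u^7*v + (-64512 : ℝ)*u^7*v^2 + (307200 : ℝ)*u^7*v^3 + (-783360 : ℝ)*u^7*v^4 + (1087488 : ℝ)*u^7*v^5 + (-774144 : ℝ)*u^7*v^6 + (221184 : ℝ)*u^7*v^7) * t ^ 3 := by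
  rw [Hnum_eq]
  simp only [phiU, phiV, phiUU, phiVV, phiUV]
  ring

lemma hasDerivAt_poly6 (c0 c1 c2 c3 c4 c5 c6 x : ℝ) :
    HasDerivAt (fun s : ℝ => c0 + c1*s + c2*s^2 + c3*s^3 + c4*s^4 + c5*s^5 + c6*s^6)
      (c1 + 2*c2*x + 3*c3*x^2 + 4*c4*x^3 + 5*c5*x^4 + 6*c6*x^5) x := by
  have h := ((((((hasDerivAt_const x c0).add ((hasDerivAt_id x).const_mul c1)).add
      ((hasDerivAt_pow 2 x).const_mul c2)).add ((hasDerivAt_pow 3 x).const_mul c3)).add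
      ((hasDerivAt_pow 4 x).const_mul c4)).add ((hasDerivAt_pow 5 x).const_mul c5)).add
      ((hasDerivAt_pow 6 x).const_mul c6)
  refine h.congr_deriv ?_
  push_cast; ring

lemma qpoly_hasDeriv : HasDerivAt qpoly ((-512 : ℝ)/75) 0 := by
  have h := hasDerivAt_poly6 ((16 : ℝ)/9) ((-512 : ℝ)/75) ((7872 : ℝ)/1225) ((512 : ℝ)/735)
    ((23552 : ℝ)/88935) ((190464 : ℝ)/25050025) ((2048 : ℝ)/2277275) 0
  convert h using 1
  · funext s; simp only [qpoly]
  · norm_num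

/-- (i) For fixed (u,v) the mean-curvature numerator of the family is a polynomial of
degree at most 3 in t, with value −4(1−2u)(1−2v) at t = 0; (ii) the mean-square curvature
μ₁²(t) = ∫₀¹∫₀¹ H₁(u,v,t)² du dv has strictly negative derivative at t = 0. -/
theorem stmt_17 :
    (∀ u v : ℝ, (∃ a₀ a₁ a₂ a₃ : ℝ, ∀ t : ℝ,
        Hnum (bilinVar t) u v = a₀ + a₁ * t + a₂ * t ^ 2 + a₃ * t ^ 3) ∧
      Hnum (bilinVar 0) u v = -4 * (1 - 2 * u) * (1 - 2 * v)) ∧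
    (DifferentiableAt ℝ
        (fun t : ℝ => ∫ u in (0:ℝ)..1, ∫ v in (0:ℝ)..1, (Hnum (bilinVar t) u v) ^ 2) 0 ∧
      deriv (fun t : ℝ =>
        ∫ u in (0:ℝ)..1, ∫ v in (0:ℝ)..1, (Hnum (bilinVar t) u v) ^ 2) 0 < 0) := by
  have hfun : (fun t : ℝ =>
      ∫ u in (0:ℝ)..1, ∫ v in (0:ℝ)..1, (Hnum (bilinVar t) u v) ^ 2) = qpoly :=
    funext fun t => mu_eq t
  constructor
  · intro u v
    refine ⟨⟨_, _, _, _, fun t => part_i u v t⟩, ?_⟩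
    rw [part_i u v 0]; ring
  · constructor
    · rw [hfun]; exact qpoly_hasDeriv.differentiableAt
    · rw [hfun, qpoly_hasDeriv.deriv]; norm_num
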